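/- Let Σ ∈ ℝ^{ℓ×ℓ} be symmetric positive definite and Σh ∈ ℝ^{h×h} be symmetric, with h ≤ ℓ. Let A ∈ ℝ^{ℓ×h} be such that AᵀΣA is positive definite, and set Ã = (AᵀΣA)⁻¹. Then the function g₁(A) = Tr((AᵀΣA)⁻¹ Σh) has Fréchet derivative at A given by H ↦ Tr(Gᵀ H) with gradient G = −2 Σ A Ã Σh Ã. -/

import Mathlib

open Matrix

attribute [local instance] Matrix.normedAddCommGroup Matrix.normedSpace

/-- The continuous linear map `H ↦ Tr(Gᵀ H)` on `ℓ×h` real matrices. -/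
noncomputable def traceCLM {ℓ h : ℕ} (G : Matrix (Fin ℓ) (Fin h) ℝ) :
    Matrix (Fin ℓ) (Fin h) ℝ →L[ℝ] ℝ :=
  LinearMap.toContinuousLinearMap
    { toFun := fun H => (Gᵀ * H).trace
      map_add' := fun X Y => by simp [Matrix.mul_add]
      map_smul' := fun c X => by simp [Matrix.mul_smul] }


variable {m n : ℕ}

lemma differentiable_entry (i : Fin m) (j : Fin n) :
    Differentiable ℝ (fun M : Matrix (Fin m) (Fin n) ℝ => M i j) :=
  ((ContinuousLinearMap.proj (R := ℝ) (φ := fun _ : Fin n => ℝ) j).comp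
    (ContinuousLinearMap.proj (R := ℝ) (φ := fun _ : Fin m => Fin n → ℝ) i)).differentiable

lemma differentiable_det :
    Differentiable ℝ (fun M : Matrix (Fin m) (Fin m) ℝ => M.det) := by
  simp only [Matrix.det_apply]
  apply Differentiable.fun_sum
  intro σ _
  simp only [Units.smul_def, zsmul_eq_mul]
  intro x
  exact ((differentiable_const _ x).mul
    (HasFDerivAt.finset_prod (u := Finset.univ)
      (g := fun i (M : Matrix (Fin m) (Fin m) ℝ) => M (σ i) i)
      (fun i _ => ((differentiable_entry (σ i) i) x).hasFDerivAt)).differentiableAt)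

lemma differentiable_updateRow (j : Fin m) (c : Fin m → ℝ) :
    Differentiable ℝ (fun M : Matrix (Fin m) (Fin m) ℝ => M.updateRow j c) := by
  refine differentiable_pi.mpr ?_
  intro a
  rw [differentiable_pi]
  intro b
  simp only [Matrix.updateRow_apply]
  by_cases hh : a = j
  · simp only [hh, if_pos rfl]
    exact differentiable_const _
  · simp only [if_neg hh]
    exact differentiable_entry a b

lemma differentiable_adjugate :
    Differentiable ℝ (fun M : Matrix (Fin m) (Fin m) ℝ => M.adjugate) := by
  refine differentiable_pi.mpr ?_
  intro i
  rw [differentiable_pi]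
  intro j
  simp only [Matrix.adjugate_apply]
  exact differentiable_det.comp (differentiable_updateRow j (Pi.single i 1))

lemma differentiableAt_matinv {X : Matrix (Fin m) (Fin m) ℝ} (hX : X.det ≠ 0) :
    DifferentiableAt ℝ (fun M : Matrix (Fin m) (Fin m) ℝ => M⁻¹) X := by
  have he : (fun M : Matrix (Fin m) (Fin m) ℝ => M⁻¹)
      = fun M => (M.det)⁻¹ • M.adjugate := by
    funext M
    rw [Matrix.inv_def, Ring.inverse_eq_inv']
  rw [he]
  exact ((differentiable_det.differentiableAt).inv hX).smul
    differentiable_adjugate.differentiableAt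

noncomputable def bilinCLM {E F G : Type*} [NormedAddCommGroup E] [NormedSpace ℝ E]
    [NormedAddCommGroup F] [NormedSpace ℝ F] [FiniteDimensional ℝ E] [FiniteDimensional ℝ F]
    [NormedAddCommGroup G] [NormedSpace ℝ G]
    (b : E →ₗ[ℝ] F →ₗ[ℝ] G) : E →L[ℝ] F →L[ℝ] G :=
  LinearMap.toContinuousLinearMap
    (((LinearMap.toContinuousLinearMap :
        (F →ₗ[ℝ] G) ≃ₗ[ℝ] (F →L[ℝ] G)) : (F →ₗ[ℝ] G) →ₗ[ℝ] (F →L[ℝ] G)).comp b)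

@[simp] lemma bilinCLM_apply {E F G : Type*} [NormedAddCommGroup E] [NormedSpace ℝ E]
    [NormedAddCommGroup F] [NormedSpace ℝ F] [FiniteDimensional ℝ E] [FiniteDimensional ℝ F]
    [NormedAddCommGroup G] [NormedSpace ℝ G]
    (b : E →ₗ[ℝ] F →ₗ[ℝ] G) (x : E) (y : F) : bilinCLM b x y = b x y := rfl

noncomputable def mulCLM (a b c : ℕ) :
    Matrix (Fin a) (Fin b) ℝ →L[ℝ] Matrix (Fin b) (Fin c) ℝ →L[ℝ] Matrix (Fin a) (Fin c) ℝ :=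
  bilinCLM (LinearMap.mk₂ ℝ (fun X Y => X * Y)
    Matrix.add_mul Matrix.smul_mul Matrix.mul_add (fun r X Y => Matrix.mul_smul X r Y))

@[simp] lemma mulCLM_apply {a b c : ℕ} (X : Matrix (Fin a) (Fin b) ℝ)
    (Y : Matrix (Fin b) (Fin c) ℝ) : mulCLM a b c X Y = X * Y := rfl

lemma hasFDerivAt_matinv (X : Matrix (Fin m) (Fin m) ℝ) (hX : X.det ≠ 0) :
    HasFDerivAt (fun Y : Matrix (Fin m) (Fin m) ℝ => Y⁻¹)
      (-(((mulCLM m m m).flip X⁻¹).comp (mulCLM m m m X⁻¹))) X := by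
  have hdiff := differentiableAt_matinv (m := m) hX
  have hinv := hdiff.hasFDerivAt
  set f' := fderiv ℝ (fun M : Matrix (Fin m) (Fin m) ℝ => M⁻¹) X with hf'
  have hm : HasFDerivAt (fun Y : Matrix (Fin m) (Fin m) ℝ => Y * Y⁻¹)
      (((mulCLM m m m).isBoundedBilinearMap.deriv (X, X⁻¹)).comp
        ((ContinuousLinearMap.id ℝ _).prod f')) X :=
    by have := HasFDerivAt.comp (f := fun Y : Matrix (Fin m) (Fin m) ℝ => (id Y, Y⁻¹)) X
          ((mulCLM m m m).isBoundedBilinearMap.hasFDerivAt (X, X⁻¹))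
          (HasFDerivAt.prodMk (hasFDerivAt_id X) hinv); exact this
  have hopen : IsOpen {Y : Matrix (Fin m) (Fin m) ℝ | Y.det ≠ 0} :=
    isOpen_compl_singleton.preimage differentiable_det.continuous
  have hev : (fun Y : Matrix (Fin m) (Fin m) ℝ => Y * Y⁻¹) =ᶠ[nhds X]
      (fun _ => (1 : Matrix (Fin m) (Fin m) ℝ)) :=
    Filter.eventuallyEq_of_mem (hopen.mem_nhds hX)
      (fun Y hY => Matrix.mul_nonsing_inv Y (isUnit_iff_ne_zero.mpr hY))
  have h0 : HasFDerivAt (fun Y : Matrix (Fin m) (Fin m) ℝ => Y * Y⁻¹)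
      (0 : Matrix (Fin m) (Fin m) ℝ →L[ℝ] Matrix (Fin m) (Fin m) ℝ) X :=
    (hasFDerivAt_const _ X).congr_of_eventuallyEq hev
  have hzero := hm.unique h0
  have hform : ∀ K : Matrix (Fin m) (Fin m) ℝ, f' K = -(X⁻¹ * K * X⁻¹) := by
    intro K
    have h3 := DFunLike.congr_fun hzero K
    simp only [ContinuousLinearMap.comp_apply, ContinuousLinearMap.prod_apply,
      ContinuousLinearMap.coe_id', id_eq, IsBoundedBilinearMap.deriv_apply,
      mulCLM_apply, ContinuousLinearMap.zero_apply] at h3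
    change X * f' K + K * X⁻¹ = 0 at h3
    -- h3 : X * f' K + K * X⁻¹ = 0
    have h4 : X * f' K = -(K * X⁻¹) := by linear_combination (norm := module) h3
    have h5 : X⁻¹ * (X * f' K) = f' K := by
      rw [← Matrix.mul_assoc, Matrix.nonsing_inv_mul X (isUnit_iff_ne_zero.mpr hX),
        Matrix.one_mul]
    rw [h4] at h5
    rw [← h5, Matrix.mul_neg, Matrix.mul_assoc]
  refine hinv.congr_fderiv ?_
  refine ContinuousLinearMap.ext fun K => ?_
  change f' K = -(X⁻¹ * K * X⁻¹)
  rw [hform K]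


@[simp] lemma traceCLM_apply {a b : ℕ} (G H : Matrix (Fin a) (Fin b) ℝ) :
    traceCLM G H = (Gᵀ * H).trace := rfl


/-- The Euclidean gradient of `g₁(A) = Tr((AᵀΣA)⁻¹ Σh)` at a point `A` where `AᵀΣA` is
positive definite is `G = −2 Σ A Ã Σh Ã`, with `Ã = (AᵀΣA)⁻¹`; i.e. `g₁` has Fréchet
derivative `H ↦ Tr(Gᵀ H)` at `A`. -/
theorem stmt_4 {ℓ h : ℕ} (hle : h ≤ ℓ)
    (S : Matrix (Fin ℓ) (Fin ℓ) ℝ) (hS : S.PosDef)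
    (Sh : Matrix (Fin h) (Fin h) ℝ) (hSh : Sh.IsSymm)
    (A : Matrix (Fin ℓ) (Fin h) ℝ) (hA : (Aᵀ * S * A).PosDef) :
    HasFDerivAt
      (fun M : Matrix (Fin ℓ) (Fin h) ℝ => ((Mᵀ * S * M)⁻¹ * Sh).trace)
      (traceCLM ((-2 : ℝ) •
        (S * A * (Aᵀ * S * A)⁻¹ * Sh * (Aᵀ * S * A)⁻¹)))
      A := by
  set X := Aᵀ * S * A with hXdef
  have hXd : X.det ≠ 0 := ne_of_gt hA.det_pos
  set qB : Matrix (Fin ℓ) (Fin h) ℝ →L[ℝ] Matrix (Fin ℓ) (Fin h) ℝ →L[ℝ]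
      Matrix (Fin h) (Fin h) ℝ :=
    bilinCLM (LinearMap.mk₂ ℝ (fun U V => Uᵀ * S * V)
      (fun U U' V => by simp [Matrix.transpose_add, Matrix.add_mul])
      (fun c U V => by simp [Matrix.transpose_smul, Matrix.smul_mul])
      (fun U V V' => by simp [Matrix.mul_add])
      (fun U c V => by simp [Matrix.mul_smul])) with hqB
  have hqB_apply : ∀ U V, qB U V = Uᵀ * S * V := fun U V => rfl
  have hpair : HasFDerivAt (fun M : Matrix (Fin ℓ) (Fin h) ℝ => (M, M))
      ((ContinuousLinearMap.id ℝ _).prod (ContinuousLinearMap.id ℝ _)) A :=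
    HasFDerivAt.prodMk (hasFDerivAt_id A) (hasFDerivAt_id A)
  have hq : HasFDerivAt (fun M : Matrix (Fin ℓ) (Fin h) ℝ => Mᵀ * S * M)
      ((qB.isBoundedBilinearMap.deriv (A, A)).comp
        ((ContinuousLinearMap.id ℝ _).prod (ContinuousLinearMap.id ℝ _))) A := by
    have hq0 := HasFDerivAt.comp (f := fun M : Matrix (Fin ℓ) (Fin h) ℝ => (M, M)) A (qB.isBoundedBilinearMap.hasFDerivAt (A, A)) hpair
    exact hq0
  have hi : HasFDerivAt (fun M : Matrix (Fin ℓ) (Fin h) ℝ => (Mᵀ * S * M)⁻¹)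
      ((-(((mulCLM h h h).flip X⁻¹).comp (mulCLM h h h X⁻¹))).comp
        ((qB.isBoundedBilinearMap.deriv (A, A)).comp
          ((ContinuousLinearMap.id ℝ _).prod (ContinuousLinearMap.id ℝ _)))) A := by
    have hi0 := (hasFDerivAt_matinv X hXd).comp A hq
    exact hi0
  set L : Matrix (Fin h) (Fin h) ℝ →L[ℝ] ℝ :=
    LinearMap.toContinuousLinearMap
      { toFun := fun W => (W * Sh).trace
        map_add' := fun U V => by simp [Matrix.add_mul]
        map_smul' := fun c U => by simp [Matrix.smul_mul] } with hLdef
  have hL_apply : ∀ W, L W = (W * Sh).trace := fun W => rfl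
  have hfinal := (L.hasFDerivAt (x := X⁻¹)).comp A hi
  refine hfinal.congr_fderiv ?_
  have hSsymm : Sᵀ = S := hS.1
  have hXs : Xᵀ = X := by
    rw [hXdef]; simp [Matrix.transpose_mul, hSsymm, Matrix.mul_assoc]
  have hXis : (X⁻¹)ᵀ = X⁻¹ := by rw [Matrix.transpose_nonsing_inv, hXs]
  refine ContinuousLinearMap.ext fun H => ?_
  change ((-(X⁻¹ * (Aᵀ * S * H + Hᵀ * S * A) * X⁻¹)) * Sh).trace
    = (((-2 : ℝ) • (S * A * X⁻¹ * Sh * X⁻¹))ᵀ * H).trace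
  have hG : ((-2 : ℝ) • (S * A * X⁻¹ * Sh * X⁻¹))ᵀ
      = (-2 : ℝ) • (X⁻¹ * Sh * X⁻¹ * Aᵀ * S) := by
    simp [Matrix.transpose_smul, Matrix.transpose_mul, hXis, hSh.eq, hSsymm, Matrix.mul_assoc]
  have t1 : (X⁻¹ * (Aᵀ * S * H) * X⁻¹ * Sh).trace
      = (X⁻¹ * Sh * X⁻¹ * Aᵀ * S * H).trace := by
    rw [show X⁻¹ * (Aᵀ * S * H) * X⁻¹ * Sh
        = (X⁻¹ * (Aᵀ * S * H)) * (X⁻¹ * Sh) from by rw [Matrix.mul_assoc]]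
    rw [Matrix.trace_mul_comm]
    simp [Matrix.mul_assoc]
  have t2 : (X⁻¹ * (Hᵀ * S * A) * X⁻¹ * Sh).trace
      = (X⁻¹ * Sh * X⁻¹ * Aᵀ * S * H).trace := by
    rw [Matrix.trace_mul_comm]
    have htr : Sh * (X⁻¹ * (Hᵀ * S * A) * X⁻¹) = ((X⁻¹ * (Aᵀ * S * H) * X⁻¹) * Sh)ᵀ := by
      simp [Matrix.transpose_mul, hXis, hSh.eq, hSsymm, Matrix.mul_assoc]
    rw [htr, Matrix.trace_transpose]
    exact t1
  simp only [Matrix.mul_add, Matrix.add_mul, Matrix.neg_mul, Matrix.trace_neg,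
    Matrix.trace_add, hG, Matrix.smul_mul, Matrix.trace_smul, smul_eq_mul, t1, t2]
  ring
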